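/- (a) If the pair (x,y) satisfies the idempotency condition and y ≠ x, x⁻¹, then ψ_k(x,y)² = −ε·(x+y)/(x−y)·ψ_k(x,y). (b) If the pair (x,y) does not satisfy the idempotency condition and y ≠ x, x⁻¹, then ψ_k(x,y) is invertible with inverse ψ_k(x,y)⁻¹ = [ 1 − ε²·( x⁻¹y/(x⁻¹y − 1)² + xy/(xy − 1)² ) ]⁻¹ · ψ_k(y,x). -/

import Mathlib

/-!
Common definitions for formalizing "Affine Sergeev Algebra and q-Analogues of the
Young Symmetrizers for Projective Representations of the Symmetric Group"
by A. R. Jones and M. L. Nazarov.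
-/

set_option maxHeartbeats 1600000
set_option synthInstance.maxHeartbeats 1000000

noncomputable section
open scoped TensorProduct

namespace Sergeev

/-- The base field `ℂ(q)` of rational functions over `ℂ`. -/
abbrev K : Type := RatFunc ℂ

/-- The indeterminate `q`. -/
def qq : K := RatFunc.X

/-- `ε = q - q⁻¹`. -/
def eps : K := qq - qq⁻¹

/-! ## The Hecke–Clifford (Sergeev) algebra `G_n(q)`.

It is presented by generators `T_1, …, T_{n-1}` and `C_1, …, C_n`; we index generators by all
naturals and kill the out-of-range ones, which yields the same presented algebra. -/

/-- Generators: `t k` is the Hecke generator `T_k`, `c k` the Clifford generator `C_k`. -/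
inductive GGen : Type
  | t : ℕ → GGen
  | c : ℕ → GGen

abbrev FG : Type := FreeAlgebra K GGen

def Tf (k : ℕ) : FG := FreeAlgebra.ι K (GGen.t k)
def Cf (k : ℕ) : FG := FreeAlgebra.ι K (GGen.c k)

/-- The defining relations of `G_n(q)`. -/
inductive HCRel (n : ℕ) : FG → FG → Prop
  | t_out (k : ℕ) (h : ¬(1 ≤ k ∧ k + 1 ≤ n)) : HCRel n (Tf k) 0
  | c_out (k : ℕ) (h : ¬(1 ≤ k ∧ k ≤ n)) : HCRel n (Cf k) 0
  | quad (k : ℕ) (h1 : 1 ≤ k) (h2 : k + 1 ≤ n) :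
      HCRel n ((Tf k - algebraMap K FG qq) * (Tf k + algebraMap K FG qq⁻¹)) 0
  | braid (k : ℕ) (h1 : 1 ≤ k) (h2 : k + 2 ≤ n) :
      HCRel n (Tf k * Tf (k+1) * Tf k) (Tf (k+1) * Tf k * Tf (k+1))
  | t_comm (k l : ℕ) (h1 : 1 ≤ k) (h2 : k + 1 ≤ n) (h3 : 1 ≤ l) (h4 : l + 1 ≤ n)
      (h5 : l ≠ k) (h6 : l ≠ k + 1) (h7 : k ≠ l + 1) : HCRel n (Tf k * Tf l) (Tf l * Tf k)
  | c_sq (k : ℕ) (h1 : 1 ≤ k) (h2 : k ≤ n) : HCRel n (Cf k * Cf k) (-1)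
  | c_anti (k l : ℕ) (h1 : 1 ≤ k) (h2 : k ≤ n) (h3 : 1 ≤ l) (h4 : l ≤ n) (h5 : l ≠ k) :
      HCRel n (Cf k * Cf l) (-(Cf l * Cf k))
  | tc_k (k : ℕ) (h1 : 1 ≤ k) (h2 : k + 1 ≤ n) : HCRel n (Tf k * Cf k) (Cf (k+1) * Tf k)
  | tc_k1 (k : ℕ) (h1 : 1 ≤ k) (h2 : k + 1 ≤ n) :
      HCRel n (Tf k * Cf (k+1)) (Cf k * Tf k - eps • (Cf k - Cf (k+1)))
  | tc_out (k l : ℕ) (h1 : 1 ≤ k) (h2 : k + 1 ≤ n) (h3 : 1 ≤ l) (h4 : l ≤ n)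
      (h5 : l ≠ k) (h6 : l ≠ k + 1) : HCRel n (Tf k * Cf l) (Cf l * Tf k)

/-- The Hecke–Clifford (Sergeev) algebra `G_n(q)`. -/
abbrev HC (n : ℕ) : Type := RingQuot (HCRel n)

/-- The Hecke generator `T_k` of `G_n(q)`. -/
def T (n k : ℕ) : HC n := RingQuot.mkAlgHom K (HCRel n) (Tf k)

/-- The Clifford generator `C_k` of `G_n(q)`. -/
def C (n k : ℕ) : HC n := RingQuot.mkAlgHom K (HCRel n) (Cf k)

/-- The Jucys–Murphy elements `J_1 = 1`, `J_{k+1} = (T_k - ε C_k C_{k+1}) J_k T_k`. -/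
def J (n : ℕ) : ℕ → HC n
  | 0 => 1
  | 1 => 1
  | k + 1 => (T n k - eps • (C n k * C n (k+1))) * J n k * T n k

/-! ## The algebraic closure `𝕂` of `ℂ(q)` and the scalar extension `G_n(q) ⊗ 𝕂`. -/

/-- `𝕂`, the algebraic closure of `ℂ(q)`. -/
abbrev AC : Type := AlgebraicClosure K

/-- `G_n(q) ⊗_{ℂ(q)} 𝕂`. -/
abbrev HCbar (n : ℕ) : Type := AC ⊗[K] HC n

def ofHC (n : ℕ) : HC n →ₐ[K] HCbar n := Algebra.TensorProduct.includeRight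

def Tb (n k : ℕ) : HCbar n := ofHC n (T n k)
def Cb (n k : ℕ) : HCbar n := ofHC n (C n k)

def epsA : AC := algebraMap K AC eps
def qA : AC := algebraMap K AC qq

/-- `[m]_{q²} = (q^{2m} - q^{-2m})/(q² - q^{-2})`. -/
def br (m : ℕ) : AC := (qA ^ (2*m) - qA⁻¹ ^ (2*m)) / (qA ^ 2 - qA⁻¹ ^ 2)

lemma exists_sq (m : ℕ) : ∃ x : AC, x ^ 2 = br m :=
  IsAlgClosed.exists_pow_nat_eq (br m) (n := 2) (by norm_num)

/-- A fixed square root `√[m]_{q²} ∈ 𝕂`. -/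
def sq (m : ℕ) : AC := Classical.choose (exists_sq m)

lemma sq_spec (m : ℕ) : sq m ^ 2 = br m := Classical.choose_spec (exists_sq m)

/-- `[m+1]_{q²} - [m]_{q²} - ε √([m+1]_{q²} [m]_{q²})`, the special-point coordinate attached to
a box of content `m`. -/
def qval (m : ℕ) : AC := br (m+1) - br m - epsA * (sq (m+1) * sq m)

/-- The elements `ψ_k(x,y) = T_k + ε/(x⁻¹y - 1) + ε/(xy - 1)·C_k C_{k+1}` of `G_n(q) ⊗ 𝕂`. -/
def psie (n k : ℕ) (x y : AC) : HCbar n :=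
  Tb n k + algebraMap AC (HCbar n) (epsA * (x⁻¹ * y - 1)⁻¹)
    + algebraMap AC (HCbar n) (epsA * (x * y - 1)⁻¹) * (Cb n k * Cb n (k+1))

/-- The idempotency condition `x⁻¹y/(x⁻¹y - 1)² + xy/(xy - 1)² = 1/ε²` on a pair `(x,y)`. -/
def idemCond (x y : AC) : Prop :=
  x⁻¹ * y / (x⁻¹ * y - 1)^2 + x * y / (x * y - 1)^2 = (epsA * epsA)⁻¹

/-- The set `𝒳` of generic `n`-tuples: `x_k ≠ 0` and `x_k ≠ x_l^{±1}` for `k ≠ l`. -/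
def genericSet (n : ℕ) : Set (ℕ → AC) :=
  {x | (∀ k, 1 ≤ k → k ≤ n → x k ≠ 0) ∧
    ∀ k l, 1 ≤ k → k ≤ n → 1 ≤ l → l ≤ n → k ≠ l → x k ≠ x l ∧ x k * x l ≠ 1}

/-- `f : 𝕂ⁿ → G_n(q) ⊗ 𝕂` is a polynomial map (in the variables `x 1, …, x n`). -/
def IsPolyMap (n : ℕ) (f : (ℕ → AC) → HCbar n) : Prop :=
  ∃ (s : Finset (MvPolynomial (Fin n) AC)) (c : MvPolynomial (Fin n) AC → HCbar n),
    ∀ x, f x = ∑ p ∈ s, MvPolynomial.eval (fun i : Fin n => x (i.1+1)) p • c p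

/-- `a` is the value at `y` of the (regular continuation of the) restriction of the rational
function `f` to the subset `S`: there is a presentation `f = N/d` valid on `S`, with `N` a
polynomial map and `d` a scalar polynomial not vanishing at `y`, and `a = N(y)/d(y)`. -/
def RegValueOn (n : ℕ) (f : (ℕ → AC) → HCbar n) (S : Set (ℕ → AC)) (y : ℕ → AC)
    (a : HCbar n) : Prop :=
  ∃ (N : (ℕ → AC) → HCbar n) (d : MvPolynomial (Fin n) AC),
    IsPolyMap n N ∧
    MvPolynomial.eval (fun i : Fin n => y (i.1+1)) d ≠ 0 ∧
    (∀ x ∈ S, MvPolynomial.eval (fun i : Fin n => x (i.1+1)) d • f x = N x) ∧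
    a = (MvPolynomial.eval (fun i : Fin n => y (i.1+1)) d)⁻¹ • N y


lemma qq_ne_zero : qq ≠ 0 := RatFunc.X_ne_zero

lemma eps_ne_zero : eps ≠ 0 := by
  unfold eps
  intro h
  have h2 : qq * qq = 1 := by
    have := sub_eq_zero.mp h
    field_simp [qq_ne_zero] at this
    linear_combination this
  have : (RatFunc.X : K) * RatFunc.X = 1 := h2
  have hdeg := congrArg RatFunc.intDegree this
  simp [RatFunc.intDegree_mul RatFunc.X_ne_zero RatFunc.X_ne_zero, RatFunc.intDegree_X] at hdeg

lemma epsA_ne_zero : epsA ≠ 0 := by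
  unfold epsA
  simpa using (map_ne_zero (algebraMap K AC)).mpr eps_ne_zero


/-! Abstract ring lemmas (proved in a generic ring, to dodge tensor-product instance issues). -/

section Abs
variable {A : Type} [Ring A]

lemma rel1_abs [Algebra K A] (t : A)
    (h : (t - algebraMap K A qq) * (t + algebraMap K A qq⁻¹) = 0) :
    t * t = 1 + algebraMap K A eps * t := by
  have hq1 : algebraMap K A qq * algebraMap K A qq⁻¹ = 1 := by
    rw [← map_mul, mul_inv_cancel₀ qq_ne_zero, map_one]
  have hcomm : t * algebraMap K A qq⁻¹ = algebraMap K A qq⁻¹ * t := (Algebra.commutes _ _).symm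
  have h2 : t*t + t * algebraMap K A qq⁻¹ - algebraMap K A qq * t
      - algebraMap K A qq * algebraMap K A qq⁻¹ = 0 := by rw [← h]; noncomm_ring
  rw [hcomm, hq1] at h2
  rw [eps, map_sub]
  linear_combination (norm := noncomm_ring) h2

lemma rel2_abs (c1 c2 : A) (ha : c1*c2 = -(c2*c1)) (hs1 : c1*c1 = -1) (hs2 : c2*c2 = -1) :
    (c1*c2)*(c1*c2) = -1 := by
  have h' : c2*c1 = -(c1*c2) := by linear_combination (norm := noncomm_ring) ha
  calc c1*c2*(c1*c2) = c1*(c2*c1)*c2 := by noncomm_ring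
    _ = c1*(-(c1*c2))*c2 := by rw [h']
    _ = -((c1*c1)*(c2*c2)) := by noncomm_ring
    _ = -((-1 : A) * (-1 : A)) := by rw [hs1, hs2]
    _ = -1 := by noncomm_ring

lemma rel3_abs (t c1 c2 e : A) (hcomm : ∀ z : A, e * z = z * e)
    (h1 : t*c1 = c2*t) (h2 : t*c2 = c1*t - e*(c1-c2))
    (ha : c1*c2 = -(c2*c1)) (hs2 : c2*c2 = -1) :
    t*(c1*c2) = -((c1*c2)*t) + e*(c1*c2) - e := by
  have step1 : t*(c1*c2) = (t*c1)*c2 := by noncomm_ring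
  rw [step1, h1, show c2*t*c2 = c2*(t*c2) by noncomm_ring, h2]
  have he1 : c2*(e*(c1-c2)) = e*(c2*c1) - e*(c2*c2) := by
    rw [show c2*(e*(c1-c2)) = (c2*e)*c1 - (c2*e)*c2 by noncomm_ring, ← hcomm c2]
    noncomm_ring
  rw [show c2 * (c1 * t - e * (c1 - c2)) = (c2*c1)*t - c2*(e*(c1-c2)) by noncomm_ring, he1,
    show c2*c1 = -(c1*c2) by linear_combination (norm := noncomm_ring) ha, hs2]
  noncomm_ring

variable [Algebra AC A]

local notation "CA" => algebraMap AC A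

lemma main_abs (t d : A)
    (h1 : t * t = 1 + CA epsA * t)
    (h2 : d * d = -1)
    (h3 : t * d = -(d * t) + CA epsA * d - CA epsA)
    (α α' β : AC) :
    (t + CA α + CA β * d) * (t + CA α' + CA β * d)
      = CA (1 + α*α' - β*β - β*epsA) + CA (epsA + α + α') * t
        + CA (β*epsA + α*β + β*α') * d := by
  have hc : ∀ (r : AC) (z : A), z * CA r = CA r * z := fun r z => (Algebra.commutes r z).symm
  have expand : (t + CA α + CA β * d) * (t + CA α' + CA β * d)
      = t*t + t * CA α' + t * (CA β * d) + CA α * t + CA α * CA α' + CA α * (CA β * d)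
        + (CA β * d) * t + (CA β * d) * CA α' + (CA β * d) * (CA β * d) := by noncomm_ring
  have e1 : t * CA α' = CA α' * t := hc _ _
  have e2 : t * (CA β * d) = CA β * (t * d) := by
    rw [show t * (CA β * d) = (t * CA β) * d by noncomm_ring, hc β t]; noncomm_ring
  have e3 : (CA β * d) * t = CA β * (d * t) := by noncomm_ring
  have e4 : (CA β * d) * CA α' = (CA β * CA α') * d := by
    rw [show (CA β * d) * CA α' = CA β * (d * CA α') by noncomm_ring, hc α' d]; noncomm_ring
  have e5 : (CA β * d) * (CA β * d) = (CA β * CA β) * (d * d) := by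
    rw [show (CA β * d) * (CA β * d) = CA β * ((d * CA β) * d) by noncomm_ring, hc β d]
    noncomm_ring
  rw [expand, e1, e2, e3, e4, e5, h1, h2, h3]
  simp only [map_add, map_mul, map_sub, map_one]
  noncomm_ring

lemma scalar_prod_abs (t d : A)
    (h1 : t * t = 1 + CA epsA * t)
    (h2 : d * d = -1)
    (h3 : t * d = -(d * t) + CA epsA * d - CA epsA)
    (α α' β : AC) (hsum : epsA + α + α' = 0) :
    (t + CA α + CA β * d) * (t + CA α' + CA β * d) = CA (1 + α*α' - β*β - β*epsA) := by
  rw [main_abs t d h1 h2 h3 α α' β, hsum,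
    show β*epsA + α*β + β*α' = β * (epsA + α + α') by ring, hsum]
  simp only [map_zero, zero_mul, mul_zero, add_zero]

lemma rhs_abs (t d : A) (lam α β : AC) :
    CA lam * (t + CA α + CA β * d)
      = CA (lam * α) + CA lam * t + CA (lam * β) * d := by
  simp only [map_mul]
  noncomm_ring

lemma unit_abs (p p' : A) (δ w : AC) (hpq : p * p' = CA δ) (hqp : p' * p = CA δ)
    (hwd : w = δ) (hw : δ ≠ 0) :
    p * (CA w⁻¹ * p') = 1 ∧ (CA w⁻¹ * p') * p = 1 := by
  subst hwd
  constructor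
  · rw [show p * (CA w⁻¹ * p') = (p * CA w⁻¹) * p' by noncomm_ring,
      (Algebra.commutes w⁻¹ p).symm, show CA w⁻¹ * p * p' = CA w⁻¹ * (p * p') by noncomm_ring,
      hpq, ← map_mul, inv_mul_cancel₀ hw, map_one]
  · rw [show (CA w⁻¹ * p') * p = CA w⁻¹ * (p' * p) by noncomm_ring, hqp,
      ← map_mul, inv_mul_cancel₀ hw, map_one]

end Abs

section Rels
variable (n k : ℕ)

def Phi (n : ℕ) : FG →ₐ[K] HCbar n := (ofHC n).comp (RingQuot.mkAlgHom K (HCRel n))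

lemma Phi_rel {n : ℕ} {a b : FG} (h : HCRel n a b) : Phi n a = Phi n b := by
  unfold Phi
  simp only [AlgHom.comp_apply]
  rw [RingQuot.mkAlgHom_rel K h]

lemma Phi_T : Phi n (Tf k) = Tb n k := rfl
lemma Phi_C : Phi n (Cf k) = Cb n k := rfl

lemma CepsA' : algebraMap AC (HCbar n) epsA = algebraMap K (HCbar n) eps := by
  rw [epsA, ← IsScalarTower.algebraMap_apply]

lemma rel1 (hk : 1 ≤ k) (hk2 : k + 1 ≤ n) :
    Tb n k * Tb n k = 1 + algebraMap AC (HCbar n) epsA * Tb n k := by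
  have h := Phi_rel (HCRel.quad (n := n) k hk hk2)
  simp only [map_mul, map_sub, map_add, map_zero, AlgHom.commutes, Phi_T] at h
  rw [CepsA']
  exact rel1_abs (Tb n k) h

lemma rel2 (hk : 1 ≤ k) (hk2 : k + 1 ≤ n) :
    (Cb n k * Cb n (k+1)) * (Cb n k * Cb n (k+1)) = -1 := by
  have ha := Phi_rel (HCRel.c_anti (n := n) k (k+1) hk (by omega) (by omega) hk2 (by omega))
  have hs1 := Phi_rel (HCRel.c_sq (n := n) k hk (by omega))
  have hs2 := Phi_rel (HCRel.c_sq (n := n) (k+1) (by omega) hk2)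
  simp only [map_mul, map_neg, map_one, Phi_C] at ha hs1 hs2
  exact rel2_abs (Cb n k) (Cb n (k+1)) ha hs1 hs2

lemma rel3 (hk : 1 ≤ k) (hk2 : k + 1 ≤ n) :
    Tb n k * (Cb n k * Cb n (k+1)) = -((Cb n k * Cb n (k+1)) * Tb n k)
      + algebraMap AC (HCbar n) epsA * (Cb n k * Cb n (k+1)) - algebraMap AC (HCbar n) epsA := by
  have h1 := Phi_rel (HCRel.tc_k (n := n) k hk hk2)
  have h2 := Phi_rel (HCRel.tc_k1 (n := n) k hk hk2)
  have ha := Phi_rel (HCRel.c_anti (n := n) k (k+1) hk (by omega) (by omega) hk2 (by omega))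
  have hs2 := Phi_rel (HCRel.c_sq (n := n) (k+1) (by omega) hk2)
  simp only [map_mul, map_neg, map_one, map_sub, map_smul, Phi_T, Phi_C] at h1 h2 ha hs2
  rw [CepsA']
  refine rel3_abs (Tb n k) (Cb n k) (Cb n (k+1)) (algebraMap K (HCbar n) eps)
    (fun z => Algebra.commutes _ _) h1 ?_ ha hs2
  have heq : ∀ z : HCbar n, eps • z = algebraMap K (HCbar n) eps * z := fun z =>
    Algebra.smul_def eps z
  rw [heq] at h2
  exact h2

end Rels

section Scalars
variable (x y : AC)

lemma hu_ne (hx : x ≠ 0) (hxy : y ≠ x) : x⁻¹*y - 1 ≠ 0 := by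
  intro h
  have h1 := sub_eq_zero.mp h
  apply hxy
  calc y = x * (x⁻¹*y) := by field_simp
    _ = x := by rw [h1, mul_one]

lemma hv_ne (hx : x ≠ 0) (hxy' : y ≠ x⁻¹) : x*y - 1 ≠ 0 := by
  intro h
  have h1 := sub_eq_zero.mp h
  apply hxy'
  calc y = x⁻¹ * (x*y) := by field_simp
    _ = x⁻¹ := by rw [h1, mul_one]

lemma hu2_ne (hy : y ≠ 0) (hxy : y ≠ x) : y⁻¹*x - 1 ≠ 0 := by
  intro h
  have h1 := sub_eq_zero.mp h
  apply hxy
  have : x = y * (y⁻¹ * x) := by field_simp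
  rw [h1, mul_one] at this
  exact this.symm

lemma hd_ne (hxy : y ≠ x) : x - y ≠ 0 := sub_ne_zero.mpr (fun h => hxy h.symm)
lemma hd_ne' (hxy : y ≠ x) : y - x ≠ 0 := sub_ne_zero.mpr hxy

lemma hinv_u (hx : x ≠ 0) : (x⁻¹*y - 1)⁻¹ = x*(y-x)⁻¹ := by
  rw [show x⁻¹*y - 1 = (y-x) * x⁻¹ by field_simp, mul_inv, inv_inv, mul_comm]

lemma hinv_u2 (hy : y ≠ 0) : (y⁻¹*x - 1)⁻¹ = y*(x-y)⁻¹ := by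
  rw [show y⁻¹*x - 1 = (x-y) * y⁻¹ by field_simp, mul_inv, inv_inv, mul_comm]

lemma sc2 (hx : x ≠ 0) (hxy : y ≠ x) :
    epsA + epsA*(x⁻¹*y - 1)⁻¹ + epsA*(x⁻¹*y - 1)⁻¹ = -(epsA*((x+y)/(x-y))) := by
  have hd := hd_ne x y hxy
  have hd' := hd_ne' x y hxy
  have h2 : -x + y ≠ 0 := by rw [neg_add_eq_sub]; exact hd'
  rw [hinv_u x y hx]
  field_simp
  ring

lemma key1 (hx : x ≠ 0) (hxy : y ≠ x) :
    (epsA*(x⁻¹*y - 1)⁻¹)*(epsA*(x⁻¹*y - 1)⁻¹) + epsA*(epsA*(x⁻¹*y - 1)⁻¹)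
      = epsA^2 * (x⁻¹*y/(x⁻¹*y - 1)^2) := by
  have hd' := hd_ne' x y hxy
  rw [hinv_u x y hx, show (x⁻¹*y - 1)^2 = ((y-x) * x⁻¹)^2 by rw [show x⁻¹*y - 1 = (y-x) * x⁻¹ by field_simp]]
  field_simp
  ring

lemma key2 (hx : x ≠ 0) (hxy' : y ≠ x⁻¹) :
    (epsA*(x*y - 1)⁻¹)*(epsA*(x*y - 1)⁻¹) + epsA*(epsA*(x*y - 1)⁻¹)
      = epsA^2 * (x*y/(x*y - 1)^2) := by
  have hv := hv_ne x y hx hxy'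
  field_simp
  ring

lemma sc_aa' (hx : x ≠ 0) (hy : y ≠ 0) (hxy : y ≠ x) :
    epsA*(y⁻¹*x - 1)⁻¹ = -epsA - epsA*(x⁻¹*y - 1)⁻¹ := by
  have hd := hd_ne x y hxy
  have hd' := hd_ne' x y hxy
  rw [hinv_u x y hx, hinv_u2 x y hy]
  field_simp
  ring

lemma haux (hx : x ≠ 0) (hy : y ≠ 0) (hxy : y ≠ x) (hxy' : y ≠ x⁻¹) (hic : idemCond x y) :
    (epsA*(x⁻¹*y - 1)⁻¹)*(epsA*(x⁻¹*y - 1)⁻¹) + epsA*(epsA*(x⁻¹*y - 1)⁻¹)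
      + ((epsA*(x*y - 1)⁻¹)*(epsA*(x*y - 1)⁻¹) + epsA*(epsA*(x*y - 1)⁻¹)) = 1 := by
  have he := epsA_ne_zero
  unfold idemCond at hic
  calc _ = epsA^2 * (x⁻¹*y/(x⁻¹*y - 1)^2 + x*y/(x*y - 1)^2) := by
        rw [mul_add, key1 x y hx hxy, key2 x y hx hxy']
    _ = epsA^2 * (epsA*epsA)⁻¹ := by rw [hic]
    _ = 1 := by field_simp

lemma hwd (hx : x ≠ 0) (hy : y ≠ 0) (hxy : y ≠ x) (hxy' : y ≠ x⁻¹) :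
    1 - epsA^2 * (x⁻¹*y/(x⁻¹*y - 1)^2 + x*y/(x*y - 1)^2)
      = 1 + (epsA*(x⁻¹*y - 1)⁻¹)*(epsA*(y⁻¹*x - 1)⁻¹)
        - (epsA*(x*y - 1)⁻¹)*(epsA*(x*y - 1)⁻¹) - (epsA*(x*y - 1)⁻¹)*epsA := by
  rw [sc_aa' x y hx hy hxy]
  have k1 := key1 x y hx hxy
  have k2 := key2 x y hx hxy'
  linear_combination k1 + k2
end Scalars

lemma w_ne (x y : AC) (hnic : ¬ idemCond x y) :
    1 - epsA^2 * (x⁻¹*y/(x⁻¹*y - 1)^2 + x*y/(x*y - 1)^2) ≠ 0 := by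
  intro h
  apply hnic
  unfold idemCond
  have h2 : (x⁻¹*y/(x⁻¹*y - 1)^2 + x*y/(x*y - 1)^2) * (epsA*epsA) = 1 := by linear_combination -h
  exact eq_inv_of_mul_eq_one_left h2

lemma partA_abs {A : Type} [Ring A] [Algebra AC A] (t d : A)
    (h1 : t * t = 1 + algebraMap AC A epsA * t)
    (h2 : d * d = -1)
    (h3 : t * d = -(d * t) + algebraMap AC A epsA * d - algebraMap AC A epsA)
    (α β lam : AC)
    (s2 : epsA + α + α = lam)
    (s1 : 1 + α*α - β*β - β*epsA = lam*α) :
    (t + algebraMap AC A α + algebraMap AC A β * d)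
        * (t + algebraMap AC A α + algebraMap AC A β * d)
      = algebraMap AC A lam * (t + algebraMap AC A α + algebraMap AC A β * d) := by
  calc (t + algebraMap AC A α + algebraMap AC A β * d)
        * (t + algebraMap AC A α + algebraMap AC A β * d)
      = algebraMap AC A (1 + α*α - β*β - β*epsA) + algebraMap AC A (epsA + α + α) * t
        + algebraMap AC A (β*epsA + α*β + β*α) * d := main_abs t d h1 h2 h3 α α β
    _ = algebraMap AC A (lam*α) + algebraMap AC A lam * t + algebraMap AC A (lam*β) * d := by
        rw [s1, s2, show β*epsA + α*β + β*α = lam*β by linear_combination β * s2]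
    _ = _ := (rhs_abs t d lam α β).symm

theorem statement8 (n : ℕ) (k : ℕ) (hk : 1 ≤ k) (hk2 : k + 1 ≤ n) (x y : AC)
    (hx : x ≠ 0) (hy : y ≠ 0) (hxy : y ≠ x) (hxy' : y ≠ x⁻¹) :
    (idemCond x y →
      psie n k x y * psie n k x y =
        - algebraMap AC (HCbar n) (epsA * ((x + y) / (x - y))) * psie n k x y) ∧
    (¬ idemCond x y →
      IsUnit (psie n k x y) ∧
      Ring.inverse (psie n k x y) =
        algebraMap AC (HCbar n)
          ((1 - epsA ^ 2 * (x⁻¹ * y / (x⁻¹ * y - 1) ^ 2 + x * y / (x * y - 1) ^ 2))⁻¹)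
          * psie n k y x) := by
  have h1 := rel1 n k hk hk2
  have h2 := rel2 n k hk hk2
  have h3 := rel3 n k hk hk2
  have hψ : psie n k x y = Tb n k + algebraMap AC (HCbar n) (epsA*(x⁻¹*y - 1)⁻¹)
      + algebraMap AC (HCbar n) (epsA*(x*y - 1)⁻¹) * (Cb n k * Cb n (k+1)) := rfl
  have hψ' : psie n k y x = Tb n k + algebraMap AC (HCbar n) (epsA*(y⁻¹*x - 1)⁻¹)
      + algebraMap AC (HCbar n) (epsA*(x*y - 1)⁻¹) * (Cb n k * Cb n (k+1)) := by
    rw [show psie n k y x = Tb n k + algebraMap AC (HCbar n) (epsA*(y⁻¹*x - 1)⁻¹)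
      + algebraMap AC (HCbar n) (epsA*(y*x - 1)⁻¹) * (Cb n k * Cb n (k+1)) from rfl,
      mul_comm y x]
  constructor
  · intro hic
    rw [hψ]
    have hs2 := sc2 x y hx hxy
    have hx1 := haux x y hx hy hxy hxy' hic
    have hs1 : 1 + (epsA*(x⁻¹*y - 1)⁻¹)*(epsA*(x⁻¹*y - 1)⁻¹)
        - (epsA*(x*y - 1)⁻¹)*(epsA*(x*y - 1)⁻¹) - (epsA*(x*y - 1)⁻¹)*epsA
        = (-(epsA*((x+y)/(x-y)))) * (epsA*(x⁻¹*y - 1)⁻¹) := by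
      linear_combination (epsA*(x⁻¹*y - 1)⁻¹) * hs2 - hx1
    have key := partA_abs (Tb n k) (Cb n k * Cb n (k+1)) h1 h2 h3
      (epsA*(x⁻¹*y - 1)⁻¹) (epsA*(x*y - 1)⁻¹) (-(epsA*((x+y)/(x-y)))) hs2 hs1
    rw [map_neg] at key
    exact key
  · intro hnic
    have ha' := sc_aa' x y hx hy hxy
    have hwdd := hwd x y hx hy hxy hxy'
    have hw0 := w_ne x y hnic
    have hδ0 : 1 + (epsA*(x⁻¹*y - 1)⁻¹)*(epsA*(y⁻¹*x - 1)⁻¹)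
        - (epsA*(x*y - 1)⁻¹)*(epsA*(x*y - 1)⁻¹) - (epsA*(x*y - 1)⁻¹)*epsA ≠ 0 := by
      rw [← hwdd]; exact hw0
    have hp1 : psie n k x y * psie n k y x
        = algebraMap AC (HCbar n) (1 + (epsA*(x⁻¹*y - 1)⁻¹)*(epsA*(y⁻¹*x - 1)⁻¹)
          - (epsA*(x*y - 1)⁻¹)*(epsA*(x*y - 1)⁻¹) - (epsA*(x*y - 1)⁻¹)*epsA) := by
      rw [hψ, hψ']
      exact scalar_prod_abs (Tb n k) (Cb n k * Cb n (k+1)) h1 h2 h3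
        (epsA*(x⁻¹*y - 1)⁻¹) (epsA*(y⁻¹*x - 1)⁻¹) (epsA*(x*y - 1)⁻¹)
        (by linear_combination ha')
    have hp2 : psie n k y x * psie n k x y
        = algebraMap AC (HCbar n) (1 + (epsA*(x⁻¹*y - 1)⁻¹)*(epsA*(y⁻¹*x - 1)⁻¹)
          - (epsA*(x*y - 1)⁻¹)*(epsA*(x*y - 1)⁻¹) - (epsA*(x*y - 1)⁻¹)*epsA) := by
      rw [hψ, hψ']
      have := scalar_prod_abs (Tb n k) (Cb n k * Cb n (k+1)) h1 h2 h3
        (epsA*(y⁻¹*x - 1)⁻¹) (epsA*(x⁻¹*y - 1)⁻¹) (epsA*(x*y - 1)⁻¹)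
        (by linear_combination ha')
      rw [show 1 + (epsA*(y⁻¹*x - 1)⁻¹)*(epsA*(x⁻¹*y - 1)⁻¹)
          - (epsA*(x*y - 1)⁻¹)*(epsA*(x*y - 1)⁻¹) - (epsA*(x*y - 1)⁻¹)*epsA
          = 1 + (epsA*(x⁻¹*y - 1)⁻¹)*(epsA*(y⁻¹*x - 1)⁻¹)
          - (epsA*(x*y - 1)⁻¹)*(epsA*(x*y - 1)⁻¹) - (epsA*(x*y - 1)⁻¹)*epsA by ring] at this
      exact this
    obtain ⟨u1, u2⟩ := unit_abs (psie n k x y) (psie n k y x) _ _ hp1 hp2 hwdd hδ0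
    refine ⟨⟨⟨psie n k x y,
      algebraMap AC (HCbar n)
        ((1 - epsA ^ 2 * (x⁻¹ * y / (x⁻¹ * y - 1) ^ 2 + x * y / (x * y - 1) ^ 2))⁻¹)
        * psie n k y x, u1, u2⟩, rfl⟩, ?_⟩
    have hinv := Ring.inverse_unit (⟨psie n k x y,
      algebraMap AC (HCbar n)
        ((1 - epsA ^ 2 * (x⁻¹ * y / (x⁻¹ * y - 1) ^ 2 + x * y / (x * y - 1) ^ 2))⁻¹)
        * psie n k y x, u1, u2⟩ : (HCbar n)ˣ)
    rw [hinv]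
    rfl
end Sergeev
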